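/- Let d ≥ 2 and let (p, v_x, v_y) ∈ C^{d+1} × C^d × C^d be an exact solution of the system S₁ = S₂ = S₃ = 0 in a neighborhood of x₀, where S₁ = -iωρ v_x + ∂_x p, S₂ = -iωρ v_y + ∂_y p, S₃ = -(iω/(ρc²)) p + ∂_x v_x + ∂_y v_y. Then the truncated Taylor polynomials (𝒯_d p, 𝒯_{d-1} v_x, 𝒯_{d-1} v_y) satisfy the quasi-Trefftz conditions 𝒯_{d-1}(S_i applied to the truncations) = 0 for i = 1,2 and 𝒯_{d-2}(S₃ applied to the truncations) = 0. -/

import Mathlib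

open Complex

/-- Partial derivative in direction `i` of a function on `ℝ × ℝ`. -/
noncomputable def pd (i : Fin 2) (f : ℝ × ℝ → ℂ) : ℝ × ℝ → ℂ :=
  fun x => fderiv ℝ f x (if i = 0 then ((1 : ℝ), (0 : ℝ)) else ((0 : ℝ), (1 : ℝ)))

/-- `taylorZero q f x₀` : the Taylor truncation of order `q` of `f` at `x₀` vanishes,
i.e. all partial derivatives of `f` of total order `≤ q` vanish at `x₀`. -/
noncomputable def taylorZero (q : ℕ) (f : ℝ × ℝ → ℂ) (x₀ : ℝ × ℝ) : Prop :=
  ∀ a b : ℕ, a + b ≤ q → (pd 0)^[a] ((pd 1)^[b] f) x₀ = 0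

/-- The Taylor polynomial of order `q` of `f` at `x₀`, as a function on `ℝ × ℝ`. -/
noncomputable def tpoly (q : ℕ) (f : ℝ × ℝ → ℂ) (x₀ : ℝ × ℝ) : ℝ × ℝ → ℂ :=
  fun x => ∑ a ∈ Finset.range (q + 1), ∑ b ∈ Finset.range (q + 1 - a),
    ((pd 0)^[a] ((pd 1)^[b] f) x₀) / ((a.factorial * b.factorial : ℕ) : ℂ)
      * ((x.1 - x₀.1 : ℝ) : ℂ) ^ a * ((x.2 - x₀.2 : ℝ) : ℂ) ^ b


open Filter Topology

namespace QTaux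

noncomputable def ve (i : Fin 2) : ℝ × ℝ := if i = 0 then ((1 : ℝ), (0 : ℝ)) else ((0 : ℝ), (1 : ℝ))

lemma pd_apply (i : Fin 2) (f : ℝ × ℝ → ℂ) (x : ℝ × ℝ) :
    pd i f x = fderiv ℝ f x (ve i) := rfl

lemma pd_congr_nhds {f g : ℝ × ℝ → ℂ} {x₀ : ℝ × ℝ} (h : f =ᶠ[𝓝 x₀] g) (i : Fin 2) :
    pd i f =ᶠ[𝓝 x₀] pd i g := by
  filter_upwards [Filter.EventuallyEq.fderiv (𝕜 := ℝ) h] with x hx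
  simp only [pd_apply, hx]

lemma pdIter_congr_nhds {f g : ℝ × ℝ → ℂ} {x₀ : ℝ × ℝ} (h : f =ᶠ[𝓝 x₀] g) (i : Fin 2) (n : ℕ) :
    (pd i)^[n] f =ᶠ[𝓝 x₀] (pd i)^[n] g := by
  induction n generalizing f g with
  | zero => exact h
  | succ n ih =>
    rw [Function.iterate_succ_apply, Function.iterate_succ_apply]
    exact ih (pd_congr_nhds h i)

lemma pd_congrOn {U : Set (ℝ × ℝ)} (hU : IsOpen U) {f g : ℝ × ℝ → ℂ}
    (h : ∀ x ∈ U, f x = g x) (i : Fin 2) : ∀ x ∈ U, pd i f x = pd i g x := fun x hx =>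
  (pd_congr_nhds (eventually_of_mem (hU.mem_nhds hx) h) i).eq_of_nhds

lemma pdIter_congrOn {U : Set (ℝ × ℝ)} (hU : IsOpen U) {f g : ℝ × ℝ → ℂ}
    (h : ∀ x ∈ U, f x = g x) (i : Fin 2) (n : ℕ) :
    ∀ x ∈ U, (pd i)^[n] f x = (pd i)^[n] g x := fun x hx =>
  (pdIter_congr_nhds (eventually_of_mem (hU.mem_nhds hx) h) i n).eq_of_nhds

lemma pd_add {f g : ℝ × ℝ → ℂ} {x : ℝ × ℝ} (hf : DifferentiableAt ℝ f x)
    (hg : DifferentiableAt ℝ g x) (i : Fin 2) :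
    pd i (fun y => f y + g y) x = pd i f x + pd i g x := by
  simp only [pd_apply, show fderiv ℝ (fun y => f y + g y) x = fderiv ℝ f x + fderiv ℝ g x from
    (hf.hasFDerivAt.add hg.hasFDerivAt).fderiv, ContinuousLinearMap.add_apply]

lemma pd_mul {f g : ℝ × ℝ → ℂ} {x : ℝ × ℝ} (hf : DifferentiableAt ℝ f x)
    (hg : DifferentiableAt ℝ g x) (i : Fin 2) :
    pd i (fun y => f y * g y) x = pd i f x * g x + f x * pd i g x := by
  simp only [pd_apply, show fderiv ℝ (fun y => f y * g y) x = f x • fderiv ℝ g x + g x • fderiv ℝ f x from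
    (hf.hasFDerivAt.mul hg.hasFDerivAt).fderiv, ContinuousLinearMap.add_apply,
    ContinuousLinearMap.smul_apply, smul_eq_mul]
  ring

lemma pd_const_mul {f : ℝ × ℝ → ℂ} {x : ℝ × ℝ} (hf : DifferentiableAt ℝ f x) (C : ℂ) (i : Fin 2) :
    pd i (fun y => C * f y) x = C * pd i f x := by
  simp only [pd_apply, fderiv_const_mul hf C, ContinuousLinearMap.smul_apply, smul_eq_mul]

lemma pd_zero (i : Fin 2) : pd i (fun _ => (0 : ℂ)) = fun _ => 0 := by
  funext x
  simp [pd_apply]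

lemma pdIter_zero (i : Fin 2) (n : ℕ) : (pd i)^[n] (fun _ => (0 : ℂ)) = fun _ => 0 := by
  induction n with
  | zero => rfl
  | succ n ih => rw [Function.iterate_succ_apply, pd_zero, ih]

lemma pd_contDiffOn {U : Set (ℝ × ℝ)} (hU : IsOpen U) {n : ℕ} {f : ℝ × ℝ → ℂ}
    (hf : ContDiffOn ℝ (n + 1 : ℕ) f U) (i : Fin 2) : ContDiffOn ℝ (n : ℕ) (pd i f) U := by
  have h1 : ContDiffOn ℝ (n : ℕ) (fderiv ℝ f) U :=
    hf.fderiv_of_isOpen hU (by exact_mod_cast le_rfl)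
  exact h1.clm_apply contDiffOn_const

lemma pdIter_contDiffOn {U : Set (ℝ × ℝ)} (hU : IsOpen U) (i : Fin 2) :
    ∀ (k m : ℕ) (f : ℝ × ℝ → ℂ), ContDiffOn ℝ (m : ℕ) f U → k ≤ m →
      ContDiffOn ℝ ((m - k : ℕ)) ((pd i)^[k] f) U := by
  intro k
  induction k with
  | zero => intro m f hf _; simpa using hf
  | succ k ih =>
    intro m f hf hk
    rw [Function.iterate_succ_apply]
    have h1 : ContDiffOn ℝ ((m - 1) + 1 : ℕ) f U := by
      have : (m - 1) + 1 = m := by omega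
      rw [this]; exact hf
    have h2 := ih (m - 1) (pd i f) (pd_contDiffOn hU h1 i) (by omega)
    have : m - 1 - k = m - (k + 1) := by omega
    rwa [this] at h2

lemma pdIter_differentiableAt {U : Set (ℝ × ℝ)} (hU : IsOpen U) {k m : ℕ} {f : ℝ × ℝ → ℂ}
    (hf : ContDiffOn ℝ (m : ℕ) f U) (hk : k < m) (i : Fin 2) {x : ℝ × ℝ} (hx : x ∈ U) :
    DifferentiableAt ℝ ((pd i)^[k] f) x := by
  have h := pdIter_contDiffOn hU i k m f hf hk.le
  have h2 := (h x hx).contDiffAt (hU.mem_nhds hx)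
  exact h2.differentiableAt (by exact_mod_cast (show m - k ≠ 0 by omega))

lemma cdOn_diffAt {U : Set (ℝ × ℝ)} (hU : IsOpen U) {m : ℕ} {f : ℝ × ℝ → ℂ}
    (hf : ContDiffOn ℝ (m : ℕ) f U) (hm : 1 ≤ m) {x : ℝ × ℝ} (hx : x ∈ U) :
    DifferentiableAt ℝ f x := by
  have := pdIter_differentiableAt hU hf (k := 0) (by omega) 0 hx
  simpa using this

lemma pdIter_add_on {U : Set (ℝ × ℝ)} (hU : IsOpen U) (i : Fin 2) :
    ∀ (k m : ℕ) (f g : ℝ × ℝ → ℂ), ContDiffOn ℝ (m : ℕ) f U → ContDiffOn ℝ (m : ℕ) g U →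
      k ≤ m → ∀ x ∈ U, (pd i)^[k] (fun y => f y + g y) x = (pd i)^[k] f x + (pd i)^[k] g x := by
  intro k
  induction k with
  | zero => intro m f g _ _ _ x _; rfl
  | succ k ih =>
    intro m f g hf hg hk x hx
    rw [Function.iterate_succ_apply, Function.iterate_succ_apply, Function.iterate_succ_apply]
    have hstep : ∀ y ∈ U, pd i (fun y => f y + g y) y = (fun y => pd i f y + pd i g y) y := by
      intro y hy
      exact pd_add (cdOn_diffAt hU hf (by omega) hy) (cdOn_diffAt hU hg (by omega) hy) i
    rw [pdIter_congrOn hU hstep i k x hx]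
    have hm : (m - 1) + 1 = m := by omega
    have hf1 : ContDiffOn ℝ ((m-1) + 1 : ℕ) f U := by rw [hm]; exact hf
    have hg1 : ContDiffOn ℝ ((m-1) + 1 : ℕ) g U := by rw [hm]; exact hg
    exact ih (m - 1) (pd i f) (pd i g) (pd_contDiffOn hU hf1 i) (pd_contDiffOn hU hg1 i)
      (by omega) x hx

lemma pdIter_const_mul_on {U : Set (ℝ × ℝ)} (hU : IsOpen U) (i : Fin 2) :
    ∀ (k m : ℕ) (C : ℂ) (f : ℝ × ℝ → ℂ), ContDiffOn ℝ (m : ℕ) f U →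
      k ≤ m → ∀ x ∈ U, (pd i)^[k] (fun y => C * f y) x = C * (pd i)^[k] f x := by
  intro k
  induction k with
  | zero => intro m C f _ _ x _; rfl
  | succ k ih =>
    intro m C f hf hk x hx
    rw [Function.iterate_succ_apply, Function.iterate_succ_apply]
    have hstep : ∀ y ∈ U, pd i (fun y => C * f y) y = (fun y => C * pd i f y) y := by
      intro y hy
      exact pd_const_mul (cdOn_diffAt hU hf (by omega) hy) C i
    rw [pdIter_congrOn hU hstep i k x hx]
    have hm : (m - 1) + 1 = m := by omega
    have hf1 : ContDiffOn ℝ ((m-1) + 1 : ℕ) f U := by rw [hm]; exact hf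
    exact ih (m - 1) C (pd i f) (pd_contDiffOn hU hf1 i) (by omega) x hx

lemma pdIter_sum_on {U : Set (ℝ × ℝ)} (hU : IsOpen U) (i : Fin 2) {ι : Type*}
    (s : Finset ι) (F : ι → ℝ × ℝ → ℂ) (k m : ℕ)
    (hF : ∀ j ∈ s, ContDiffOn ℝ (m : ℕ) (F j) U) (hk : k ≤ m) :
    ∀ x ∈ U, (pd i)^[k] (fun y => ∑ j ∈ s, F j y) x = ∑ j ∈ s, (pd i)^[k] (F j) x := by
  classical
  induction s using Finset.induction_on with
  | empty =>
    intro x hx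
    simp only [Finset.sum_empty]
    rw [pdIter_zero i k]
  | insert j s hnot ih =>
    intro x hx
    have hstep : ∀ y ∈ U, (fun y => ∑ t ∈ insert j s, F t y) y
        = (fun y => F j y + ∑ t ∈ s, F t y) y := by
      intro y _; simp [Finset.sum_insert hnot]
    rw [pdIter_congrOn hU hstep i k x hx]
    have hFs : ContDiffOn ℝ (m : ℕ) (fun y => ∑ t ∈ s, F t y) U :=
      ContDiffOn.sum (fun t ht => hF t (Finset.mem_insert_of_mem ht))
    rw [pdIter_add_on hU i k m _ _ (hF j (Finset.mem_insert_self j s)) hFs hk x hx]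
    rw [ih (fun t ht => hF t (Finset.mem_insert_of_mem ht)) x hx]
    rw [Finset.sum_insert hnot]

lemma pd_comm_at {f : ℝ × ℝ → ℂ} {x : ℝ × ℝ} (hf : ContDiffAt ℝ 2 f x) :
    pd 0 (pd 1 f) x = pd 1 (pd 0 f) x := by
  have hdiff : DifferentiableAt ℝ (fderiv ℝ f) x :=
    (hf.fderiv_right (m := 1) (by norm_num)).differentiableAt (by norm_num)
  have key : ∀ v w : ℝ × ℝ, fderiv ℝ (fun y => fderiv ℝ f y w) x v
      = fderiv ℝ (fderiv ℝ f) x v w := by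
    intro v w
    have h1 : HasFDerivAt (fun y => fderiv ℝ f y w)
        ((ContinuousLinearMap.apply ℝ ℂ w).comp (fderiv ℝ (fderiv ℝ f) x)) x :=
      (ContinuousLinearMap.apply ℝ ℂ w).hasFDerivAt.comp x hdiff.hasFDerivAt
    rw [h1.fderiv]; rfl
  have hsymm := hf.isSymmSndFDerivAt (by simp [minSmoothness_of_isRCLikeNormedField])
  show fderiv ℝ (fun y => fderiv ℝ f y (ve 1)) x (ve 0)
      = fderiv ℝ (fun y => fderiv ℝ f y (ve 0)) x (ve 1)
  rw [key, key]
  exact hsymm.eq _ _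

lemma pd_comm_iter_on {U : Set (ℝ × ℝ)} (hU : IsOpen U) :
    ∀ (b m : ℕ) (f : ℝ × ℝ → ℂ), ContDiffOn ℝ (m : ℕ) f U → b + 1 ≤ m →
      ∀ x ∈ U, (pd 1)^[b] (pd 0 f) x = pd 0 ((pd 1)^[b] f) x := by
  intro b
  induction b with
  | zero => intro m f _ _ x _; rfl
  | succ b ih =>
    intro m f hf hb x hx
    rw [Function.iterate_succ_apply]
    have hcomm : ∀ y ∈ U, pd 1 (pd 0 f) y = (pd 0 (pd 1 f)) y := by
      intro y hy
      exact (pd_comm_at (((hf y hy).contDiffAt (hU.mem_nhds hy)).of_le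
        (by exact_mod_cast (by omega : 2 ≤ m)))).symm
    rw [pdIter_congrOn hU hcomm 1 b x hx]
    have hm1 : (m - 1) + 1 = m := by omega
    have hf1 : ContDiffOn ℝ ((m - 1) + 1 : ℕ) f U := by rw [hm1]; exact hf
    rw [ih (m - 1) (pd 1 f) (pd_contDiffOn hU hf1 1) (by omega) x hx,
      ← Function.iterate_succ_apply]

lemma D_pd0_on {U : Set (ℝ × ℝ)} (hU : IsOpen U) {x₀ : ℝ × ℝ} (hx₀ : x₀ ∈ U) {m a b : ℕ}
    {f : ℝ × ℝ → ℂ} (hf : ContDiffOn ℝ (m : ℕ) f U) (hb : b + 1 ≤ m) :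
    (pd 0)^[a] ((pd 1)^[b] (pd 0 f)) x₀ = (pd 0)^[a + 1] ((pd 1)^[b] f) x₀ := by
  have h := pd_comm_iter_on hU b m f hf hb
  rw [pdIter_congrOn hU h 0 a x₀ hx₀, Function.iterate_succ_apply]

lemma D_pd1 (a b : ℕ) (f : ℝ × ℝ → ℂ) (x₀ : ℝ × ℝ) :
    (pd 0)^[a] ((pd 1)^[b] (pd 1 f)) x₀ = (pd 0)^[a] ((pd 1)^[b + 1] f) x₀ := by
  rw [Function.iterate_succ_apply]

lemma D_congrOn {U : Set (ℝ × ℝ)} (hU : IsOpen U) {x₀ : ℝ × ℝ} (hx₀ : x₀ ∈ U)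
    {f g : ℝ × ℝ → ℂ} (h : ∀ x ∈ U, f x = g x) (a b : ℕ) :
    (pd 0)^[a] ((pd 1)^[b] f) x₀ = (pd 0)^[a] ((pd 1)^[b] g) x₀ :=
  pdIter_congrOn hU (pdIter_congrOn hU h 1 b) 0 a x₀ hx₀

lemma D_add_on {U : Set (ℝ × ℝ)} (hU : IsOpen U) {x₀ : ℝ × ℝ} (hx₀ : x₀ ∈ U) {m a b : ℕ}
    {f g : ℝ × ℝ → ℂ} (hf : ContDiffOn ℝ (m : ℕ) f U) (hg : ContDiffOn ℝ (m : ℕ) g U)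
    (hab : a + b ≤ m) :
    (pd 0)^[a] ((pd 1)^[b] (fun y => f y + g y)) x₀
      = (pd 0)^[a] ((pd 1)^[b] f) x₀ + (pd 0)^[a] ((pd 1)^[b] g) x₀ := by
  have h1 := pdIter_add_on hU 1 b m f g hf hg (by omega)
  rw [pdIter_congrOn hU h1 0 a x₀ hx₀]
  exact pdIter_add_on hU 0 a (m - b) _ _ (pdIter_contDiffOn hU 1 b m f hf (by omega))
    (pdIter_contDiffOn hU 1 b m g hg (by omega)) (by omega) x₀ hx₀

lemma D_const_mul_on {U : Set (ℝ × ℝ)} (hU : IsOpen U) {x₀ : ℝ × ℝ} (hx₀ : x₀ ∈ U) {m a b : ℕ}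
    (C : ℂ) {f : ℝ × ℝ → ℂ} (hf : ContDiffOn ℝ (m : ℕ) f U) (hab : a + b ≤ m) :
    (pd 0)^[a] ((pd 1)^[b] (fun y => C * f y)) x₀ = C * (pd 0)^[a] ((pd 1)^[b] f) x₀ := by
  have h1 := pdIter_const_mul_on hU 1 b m C f hf (by omega)
  rw [pdIter_congrOn hU h1 0 a x₀ hx₀]
  exact pdIter_const_mul_on hU 0 a (m - b) C _ (pdIter_contDiffOn hU 1 b m f hf (by omega))
    (by omega) x₀ hx₀

lemma leibniz_zero {U : Set (ℝ × ℝ)} (hU : IsOpen U) {x₀ : ℝ × ℝ} (hx₀ : x₀ ∈ U) :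
    ∀ (n m : ℕ) (g h : ℝ × ℝ → ℂ), ContDiffOn ℝ (m : ℕ) g U → ContDiffOn ℝ (m : ℕ) h U →
      n ≤ m → (∀ a b, a + b ≤ n → (pd 0)^[a] ((pd 1)^[b] h) x₀ = 0) →
      ∀ a b, a + b ≤ n → (pd 0)^[a] ((pd 1)^[b] (fun y => g y * h y)) x₀ = 0 := by
  intro n
  induction n with
  | zero =>
    intro m g h _ _ _ hzero a b hab
    obtain ⟨rfl, rfl⟩ : a = 0 ∧ b = 0 := by omega
    have h0 : h x₀ = 0 := by simpa using hzero 0 0 le_rfl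
    simpa [h0] using (rfl : g x₀ * h x₀ = g x₀ * h x₀)
  | succ n ih =>
    intro m g h hg hh hm hzero a b hab
    have hm1 : (m - 1) + 1 = m := by omega
    have hgm1 : ContDiffOn ℝ ((m - 1) + 1 : ℕ) g U := by rw [hm1]; exact hg
    have hhm1 : ContDiffOn ℝ ((m - 1) + 1 : ℕ) h U := by rw [hm1]; exact hh
    have hg' : ContDiffOn ℝ ((m - 1) : ℕ) g U := hg.of_le (by exact_mod_cast (by omega : m - 1 ≤ m))
    have hh' : ContDiffOn ℝ ((m - 1) : ℕ) h U := hh.of_le (by exact_mod_cast (by omega : m - 1 ≤ m))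
    rcases Nat.eq_zero_or_pos b with rfl | hbpos
    · rcases Nat.eq_zero_or_pos a with rfl | hapos
      · have h0 : h x₀ = 0 := by simpa using hzero 0 0 (by omega)
        simpa [h0] using (rfl : g x₀ * h x₀ = g x₀ * h x₀)
      · obtain ⟨A, rfl⟩ : ∃ A, a = A + 1 := ⟨a - 1, by omega⟩
        simp only [Function.iterate_zero_apply] at hab ⊢
        rw [Function.iterate_succ_apply]
        have hstep : ∀ y ∈ U, pd 0 (fun y => g y * h y) y
            = (fun y => pd 0 g y * h y + g y * pd 0 h y) y := fun y hy =>
          pd_mul (cdOn_diffAt hU hg (by omega) hy) (cdOn_diffAt hU hh (by omega) hy) 0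
        rw [pdIter_congrOn hU hstep 0 A x₀ hx₀]
        rw [pdIter_add_on hU 0 A (m - 1) _ _
          ((pd_contDiffOn hU hgm1 0).mul hh') (hg'.mul (pd_contDiffOn hU hhm1 0))
          (by omega) x₀ hx₀]
        have t1 : (pd 0)^[A] ((pd 1)^[0] (fun y => pd 0 g y * h y)) x₀ = 0 :=
          ih (m - 1) (pd 0 g) h (pd_contDiffOn hU hgm1 0) hh' (by omega)
            (fun a b hab => hzero a b (by omega)) A 0 (by omega)
        have t2 : (pd 0)^[A] ((pd 1)^[0] (fun y => g y * pd 0 h y)) x₀ = 0 := by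
          have hz : ∀ a b, a + b ≤ n → (pd 0)^[a] ((pd 1)^[b] (pd 0 h)) x₀ = 0 := by
            intro a b hab
            rw [D_pd0_on hU hx₀ hh (by omega)]
            exact hzero (a + 1) b (by omega)
          exact ih (m - 1) g (pd 0 h) hg' (pd_contDiffOn hU hhm1 0) (by omega) hz A 0 (by omega)
        simp only [Function.iterate_zero_apply] at t1 t2
        rw [t1, t2, add_zero]
    · obtain ⟨B, rfl⟩ : ∃ B, b = B + 1 := ⟨b - 1, by omega⟩
      rw [Function.iterate_succ_apply]
      have hstep : ∀ y ∈ U, pd 1 (fun y => g y * h y) y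
          = (fun y => pd 1 g y * h y + g y * pd 1 h y) y := fun y hy =>
        pd_mul (cdOn_diffAt hU hg (by omega) hy) (cdOn_diffAt hU hh (by omega) hy) 1
      rw [D_congrOn hU hx₀ hstep a B]
      rw [D_add_on hU hx₀ (m := m - 1)
        ((pd_contDiffOn hU hgm1 1).mul hh') (hg'.mul (pd_contDiffOn hU hhm1 1)) (by omega)]
      have t1 : (pd 0)^[a] ((pd 1)^[B] (fun y => pd 1 g y * h y)) x₀ = 0 :=
        ih (m - 1) (pd 1 g) h (pd_contDiffOn hU hgm1 1) hh' (by omega)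
          (fun a b hab => hzero a b (by omega)) a B (by omega)
      have t2 : (pd 0)^[a] ((pd 1)^[B] (fun y => g y * pd 1 h y)) x₀ = 0 := by
        have hz : ∀ α β, α + β ≤ n → (pd 0)^[α] ((pd 1)^[β] (pd 1 h)) x₀ = 0 := by
          intro α β hαβ
          rw [D_pd1]
          exact hzero α (β + 1) (by omega)
        exact ih (m - 1) g (pd 1 h) hg' (pd_contDiffOn hU hhm1 1) (by omega) hz a B (by omega)
      rw [t1, t2, add_zero]

noncomputable def mono (c : ℝ × ℝ) (m n : ℕ) : ℝ × ℝ → ℂ :=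
  fun x => ((x.1 - c.1 : ℝ) : ℂ) ^ m * ((x.2 - c.2 : ℝ) : ℂ) ^ n

lemma contDiff_mono (c : ℝ × ℝ) (m n : ℕ) {k : WithTop ℕ∞} : ContDiff ℝ k (mono c m n) := by
  apply ContDiff.mul
  · exact (Complex.ofRealCLM.contDiff.comp (contDiff_fst.sub contDiff_const)).pow m
  · exact (Complex.ofRealCLM.contDiff.comp (contDiff_snd.sub contDiff_const)).pow n

lemma differentiable_mono (c : ℝ × ℝ) (m n : ℕ) : Differentiable ℝ (mono c m n) :=
  (contDiff_mono c m n (k := 1)).differentiable one_ne_zero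

lemma diff_X1 (c : ℝ × ℝ) : Differentiable ℝ (fun y : ℝ × ℝ => ((y.1 - c.1 : ℝ) : ℂ)) :=
  fun x => (Complex.ofRealCLM.differentiable.comp (differentiable_fst.sub_const c.1)).differentiableAt

lemma diff_X2 (c : ℝ × ℝ) : Differentiable ℝ (fun y : ℝ × ℝ => ((y.2 - c.2 : ℝ) : ℂ)) :=
  fun x => (Complex.ofRealCLM.differentiable.comp (differentiable_snd.sub_const c.2)).differentiableAt

lemma hasFDeriv_X1 (c : ℝ × ℝ) (x : ℝ × ℝ) :
    HasFDerivAt (fun y : ℝ × ℝ => ((y.1 - c.1 : ℝ) : ℂ))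
      (Complex.ofRealCLM.comp (ContinuousLinearMap.fst ℝ ℝ ℝ)) x :=
  Complex.ofRealCLM.hasFDerivAt.comp x (hasFDerivAt_fst.sub_const c.1)

lemma hasFDeriv_X2 (c : ℝ × ℝ) (x : ℝ × ℝ) :
    HasFDerivAt (fun y : ℝ × ℝ => ((y.2 - c.2 : ℝ) : ℂ))
      (Complex.ofRealCLM.comp (ContinuousLinearMap.snd ℝ ℝ ℝ)) x :=
  Complex.ofRealCLM.hasFDerivAt.comp x (hasFDerivAt_snd.sub_const c.2)

lemma pd0_X1 (c : ℝ × ℝ) (x : ℝ × ℝ) : pd 0 (fun y : ℝ × ℝ => ((y.1 - c.1 : ℝ) : ℂ)) x = 1 := by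
  rw [pd_apply, (hasFDeriv_X1 c x).fderiv]
  simp [ve]

lemma pd1_X1 (c : ℝ × ℝ) (x : ℝ × ℝ) : pd 1 (fun y : ℝ × ℝ => ((y.1 - c.1 : ℝ) : ℂ)) x = 0 := by
  rw [pd_apply, (hasFDeriv_X1 c x).fderiv]
  simp [ve]

lemma pd0_X2 (c : ℝ × ℝ) (x : ℝ × ℝ) : pd 0 (fun y : ℝ × ℝ => ((y.2 - c.2 : ℝ) : ℂ)) x = 0 := by
  rw [pd_apply, (hasFDeriv_X2 c x).fderiv]
  simp [ve]

lemma pd1_X2 (c : ℝ × ℝ) (x : ℝ × ℝ) : pd 1 (fun y : ℝ × ℝ => ((y.2 - c.2 : ℝ) : ℂ)) x = 1 := by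
  rw [pd_apply, (hasFDeriv_X2 c x).fderiv]
  simp [ve]

lemma pd_const (i : Fin 2) (C : ℂ) : pd i (fun _ => C) = fun _ => 0 := by
  funext x
  simp [pd_apply]

lemma pd_pow {f : ℝ × ℝ → ℂ} (hf : Differentiable ℝ f) (i : Fin 2) (m : ℕ) (x : ℝ × ℝ) :
    pd i (fun y => f y ^ m) x = m * f x ^ (m - 1) * pd i f x := by
  induction m with
  | zero =>
    have h : (fun y : ℝ × ℝ => f y ^ 0) = fun _ => (1 : ℂ) := by funext y; simp
    rw [h, pd_const]
    simp
  | succ m ihm =>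
    have h : (fun y : ℝ × ℝ => f y ^ (m + 1)) = fun y => f y ^ m * f y := by
      funext y; rw [pow_succ]
    rw [h, pd_mul (f := fun y => f y ^ m) (hf.pow m).differentiableAt hf.differentiableAt i, ihm]
    cases m with
    | zero => simp
    | succ k =>
      simp only [Nat.add_sub_cancel]
      push_cast
      ring

lemma pd0_mono (c : ℝ × ℝ) (m n : ℕ) :
    pd 0 (mono c m n) = fun x => (m : ℂ) * mono c (m - 1) n x := by
  funext x
  have h : pd 0 (mono c m n) x
      = pd 0 (fun y => ((y.1 - c.1 : ℝ) : ℂ) ^ m) x * ((x.2 - c.2 : ℝ) : ℂ) ^ n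
        + ((x.1 - c.1 : ℝ) : ℂ) ^ m * pd 0 (fun y => ((y.2 - c.2 : ℝ) : ℂ) ^ n) x :=
    pd_mul ((diff_X1 c).pow m).differentiableAt ((diff_X2 c).pow n).differentiableAt 0
  rw [h, pd_pow (diff_X1 c) 0 m x, pd_pow (diff_X2 c) 0 n x, pd0_X1, pd0_X2]
  simp only [mono]
  ring

lemma pd1_mono (c : ℝ × ℝ) (m n : ℕ) :
    pd 1 (mono c m n) = fun x => (n : ℂ) * mono c m (n - 1) x := by
  funext x
  have h : pd 1 (mono c m n) x
      = pd 1 (fun y => ((y.1 - c.1 : ℝ) : ℂ) ^ m) x * ((x.2 - c.2 : ℝ) : ℂ) ^ n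
        + ((x.1 - c.1 : ℝ) : ℂ) ^ m * pd 1 (fun y => ((y.2 - c.2 : ℝ) : ℂ) ^ n) x :=
    pd_mul ((diff_X1 c).pow m).differentiableAt ((diff_X2 c).pow n).differentiableAt 1
  rw [h, pd_pow (diff_X1 c) 1 m x, pd_pow (diff_X2 c) 1 n x, pd1_X1, pd1_X2]
  simp only [mono]
  ring

lemma pd0_cmono (c : ℝ × ℝ) (C : ℂ) (m n : ℕ) :
    pd 0 (fun x => C * mono c m n x) = fun x => (C * m) * mono c (m - 1) n x := by
  funext x
  rw [pd_const_mul (differentiable_mono c m n).differentiableAt C 0]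
  have := congrFun (pd0_mono c m n) x
  rw [this]
  ring

lemma pd1_cmono (c : ℝ × ℝ) (C : ℂ) (m n : ℕ) :
    pd 1 (fun x => C * mono c m n x) = fun x => (C * n) * mono c m (n - 1) x := by
  funext x
  rw [pd_const_mul (differentiable_mono c m n).differentiableAt C 1]
  have := congrFun (pd1_mono c m n) x
  rw [this]
  ring

lemma pd1Iter_cmono (c : ℝ × ℝ) (C : ℂ) (m n b : ℕ) :
    (pd 1)^[b] (fun x => C * mono c m n x)
      = fun x => (C * (n.descFactorial b : ℕ)) * mono c m (n - b) x := by
  induction b with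
  | zero => simp
  | succ b ih =>
    rw [Function.iterate_succ_apply', ih, pd1_cmono]
    funext x
    have hd : (n.descFactorial (b + 1) : ℂ) = (n.descFactorial b : ℕ) * ((n - b : ℕ) : ℂ) := by
      rw [Nat.descFactorial_succ]
      push_cast
      ring
    have hsub : n - b - 1 = n - (b + 1) := by omega
    rw [hsub, hd]
    ring

lemma pd0Iter_cmono (c : ℝ × ℝ) (C : ℂ) (m n a : ℕ) :
    (pd 0)^[a] (fun x => C * mono c m n x)
      = fun x => (C * (m.descFactorial a : ℕ)) * mono c (m - a) n x := by
  induction a with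
  | zero => simp
  | succ a ih =>
    rw [Function.iterate_succ_apply', ih, pd0_cmono]
    funext x
    have hd : (m.descFactorial (a + 1) : ℂ) = (m.descFactorial a : ℕ) * ((m - a : ℕ) : ℂ) := by
      rw [Nat.descFactorial_succ]
      push_cast
      ring
    have hsub : m - a - 1 = m - (a + 1) := by omega
    rw [hsub, hd]
    ring

lemma mono_self (c : ℝ × ℝ) (m n : ℕ) :
    mono c m n c = if m = 0 ∧ n = 0 then 1 else 0 := by
  simp only [mono, sub_self, Complex.ofReal_zero]
  rcases Nat.eq_zero_or_pos m with rfl | hm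
  · rcases Nat.eq_zero_or_pos n with rfl | hn
    · simp
    · simp [zero_pow (by omega : n ≠ 0), hn.ne']
  · simp [zero_pow (by omega : m ≠ 0), hm.ne']

lemma D_cmono (x₀ : ℝ × ℝ) (C : ℂ) (m n A B : ℕ) :
    (pd 0)^[A] ((pd 1)^[B] (fun x => C * mono x₀ m n x)) x₀
      = if m = A ∧ n = B then C * ((A.factorial * B.factorial : ℕ) : ℂ) else 0 := by
  rw [pd1Iter_cmono, pd0Iter_cmono]
  beta_reduce
  rw [mono_self]
  by_cases hmn : m = A ∧ n = B
  · obtain ⟨rfl, rfl⟩ := hmn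
    simp [Nat.descFactorial_self]
    push_cast
    ring
  · rw [if_neg hmn]
    rcases not_and_or.1 hmn with hm | hn
    · rcases Nat.lt_or_ge m A with hlt | hge
      · simp [Nat.descFactorial_eq_zero_iff_lt.2 hlt]
      · have : ¬(m - A = 0 ∧ n - B = 0) := by
          intro ⟨h1, _⟩; exact hm (by omega)
        simp [this]
    · rcases Nat.lt_or_ge n B with hlt | hge
      · simp [Nat.descFactorial_eq_zero_iff_lt.2 hlt]
      · have : ¬(m - A = 0 ∧ n - B = 0) := by
          intro ⟨_, h2⟩; exact hn (by omega)
        simp [this]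

noncomputable def tcoef (q : ℕ) (f : ℝ × ℝ → ℂ) (x₀ : ℝ × ℝ) (a b : ℕ) : ℂ :=
  ((pd 0)^[a] ((pd 1)^[b] f) x₀) / ((a.factorial * b.factorial : ℕ) : ℂ)

lemma tpoly_rep (q : ℕ) (f : ℝ × ℝ → ℂ) (x₀ : ℝ × ℝ) :
    tpoly q f x₀ = fun x => ∑ a ∈ Finset.range (q + 1), ∑ b ∈ Finset.range (q + 1 - a),
      tcoef q f x₀ a b * mono x₀ a b x := by
  funext x
  simp only [tpoly, tcoef, mono, mul_assoc]

lemma contDiff_tpoly (q : ℕ) (f : ℝ × ℝ → ℂ) (x₀ : ℝ × ℝ) {k : WithTop ℕ∞} :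
    ContDiff ℝ k (tpoly q f x₀) := by
  rw [tpoly_rep]
  apply ContDiff.sum
  intro a _
  apply ContDiff.sum
  intro b _
  exact contDiff_const.mul (contDiff_mono x₀ a b)

lemma pd_sum {ι : Type*} {s : Finset ι} {F : ι → ℝ × ℝ → ℂ} {y : ℝ × ℝ}
    (h : ∀ j ∈ s, DifferentiableAt ℝ (F j) y) (i : Fin 2) :
    pd i (fun x => ∑ j ∈ s, F j x) y = ∑ j ∈ s, pd i (F j) y := by
  simp only [pd_apply, fderiv_fun_sum h, ContinuousLinearMap.sum_apply]

lemma pd0_tpoly_rep (q : ℕ) (f : ℝ × ℝ → ℂ) (x₀ : ℝ × ℝ) :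
    pd 0 (tpoly q f x₀) = fun y => ∑ a ∈ Finset.range (q + 1), ∑ b ∈ Finset.range (q + 1 - a),
      (tcoef q f x₀ a b * a) * mono x₀ (a - 1) b y := by
  funext y
  rw [tpoly_rep]
  rw [pd_sum (fun j _ => (ContDiff.sum (fun b _ =>
    (contDiff_const.mul (contDiff_mono x₀ j b) : ContDiff ℝ 1 _))).differentiable
      one_ne_zero |>.differentiableAt) 0]
  apply Finset.sum_congr rfl
  intro a _
  rw [pd_sum (fun b _ => ((contDiff_const.mul (contDiff_mono x₀ a b) :
    ContDiff ℝ 1 _)).differentiable one_ne_zero |>.differentiableAt) 0]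
  apply Finset.sum_congr rfl
  intro b _
  rw [pd0_cmono]

lemma pd1_tpoly_rep (q : ℕ) (f : ℝ × ℝ → ℂ) (x₀ : ℝ × ℝ) :
    pd 1 (tpoly q f x₀) = fun y => ∑ a ∈ Finset.range (q + 1), ∑ b ∈ Finset.range (q + 1 - a),
      (tcoef q f x₀ a b * b) * mono x₀ a (b - 1) y := by
  funext y
  rw [tpoly_rep]
  rw [pd_sum (fun j _ => (ContDiff.sum (fun b _ =>
    (contDiff_const.mul (contDiff_mono x₀ j b) : ContDiff ℝ 1 _))).differentiable
      one_ne_zero |>.differentiableAt) 1]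
  apply Finset.sum_congr rfl
  intro a _
  rw [pd_sum (fun b _ => ((contDiff_const.mul (contDiff_mono x₀ a b) :
    ContDiff ℝ 1 _)).differentiable one_ne_zero |>.differentiableAt) 1]
  apply Finset.sum_congr rfl
  intro b _
  rw [pd1_cmono]

lemma D_sum (x₀ : ℝ × ℝ) {ι : Type*} (s : Finset ι) (F : ι → ℝ × ℝ → ℂ) (A B : ℕ)
    (hF : ∀ j ∈ s, ContDiff ℝ ((A + B : ℕ)) (F j)) :
    (pd 0)^[A] ((pd 1)^[B] (fun y => ∑ j ∈ s, F j y)) x₀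
      = ∑ j ∈ s, (pd 0)^[A] ((pd 1)^[B] (F j)) x₀ := by
  have h1 := pdIter_sum_on isOpen_univ 1 s F B (A + B)
    (fun j hj => (contDiffOn_univ.2 (hF j hj))) (by omega)
  rw [pdIter_congrOn isOpen_univ (fun x hx => h1 x hx) 0 A x₀ trivial]
  exact pdIter_sum_on isOpen_univ 0 s (fun j => (pd 1)^[B] (F j)) A (A + B - B)
    (fun j hj => pdIter_contDiffOn isOpen_univ 1 B (A + B) (F j)
      (contDiffOn_univ.2 (hF j hj)) (by omega)) (by omega) x₀ trivial

lemma D_tpoly (q : ℕ) (f : ℝ × ℝ → ℂ) (x₀ : ℝ × ℝ) (A B : ℕ) :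
    (pd 0)^[A] ((pd 1)^[B] (tpoly q f x₀)) x₀
      = if A + B ≤ q then (pd 0)^[A] ((pd 1)^[B] f) x₀ else 0 := by
  rw [tpoly_rep]
  rw [D_sum x₀ _ _ A B
    (fun a _ => ContDiff.sum (fun b _ => contDiff_const.mul (contDiff_mono x₀ a b)))]
  have hinner : ∀ a ∈ Finset.range (q + 1),
      (pd 0)^[A] ((pd 1)^[B]
        (fun y => ∑ b ∈ Finset.range (q + 1 - a), tcoef q f x₀ a b * mono x₀ a b y)) x₀
      = ∑ b ∈ Finset.range (q + 1 - a),
          (if a = A ∧ b = B then tcoef q f x₀ a b * ((A.factorial * B.factorial : ℕ) : ℂ)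
            else 0) := by
    intro a _
    rw [D_sum x₀ _ _ A B (fun b _ => contDiff_const.mul (contDiff_mono x₀ a b))]
    exact Finset.sum_congr rfl (fun b _ => D_cmono x₀ _ a b A B)
  rw [Finset.sum_congr rfl hinner]
  by_cases hq : A + B ≤ q
  · rw [if_pos hq]
    have houter := Finset.sum_eq_single_of_mem (s := Finset.range (q + 1)) (f := fun a => ∑ b ∈ Finset.range (q + 1 - a),
        (if a = A ∧ b = B then tcoef q f x₀ a b * ((A.factorial * B.factorial : ℕ) : ℂ) else 0))
      A (Finset.mem_range.2 (by omega))
      (fun a _ haA => Finset.sum_eq_zero (fun b _ => by simp [haA]))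
    have hB := Finset.sum_eq_single_of_mem (s := Finset.range (q + 1 - A)) (f := fun b =>
        (if A = A ∧ b = B then tcoef q f x₀ A b * ((A.factorial * B.factorial : ℕ) : ℂ) else 0))
      B (Finset.mem_range.2 (by omega))
      (fun b _ hbB => by simp [hbB])
    refine Eq.trans houter (Eq.trans hB ?_)
    beta_reduce
    rw [if_pos ⟨rfl, rfl⟩, tcoef]
    exact div_mul_cancel₀ _
      (by exact_mod_cast Nat.mul_ne_zero A.factorial_ne_zero B.factorial_ne_zero)
  · rw [if_neg hq]
    apply Finset.sum_eq_zero; intro a ha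
    apply Finset.sum_eq_zero; intro b hb
    have hno : ¬(a = A ∧ b = B) := by
      rintro ⟨rfl, rfl⟩
      have h1 := Finset.mem_range.1 ha
      have h2 := Finset.mem_range.1 hb
      omega
    simp [hno]

lemma D_pd0_tpoly (q : ℕ) (f : ℝ × ℝ → ℂ) (x₀ : ℝ × ℝ) (A B : ℕ) :
    (pd 0)^[A] ((pd 1)^[B] (pd 0 (tpoly q f x₀))) x₀
      = if A + 1 + B ≤ q then (pd 0)^[A + 1] ((pd 1)^[B] f) x₀ else 0 := by
  rw [pd0_tpoly_rep]
  rw [D_sum x₀ _ _ A B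
    (fun a _ => ContDiff.sum (fun b _ => contDiff_const.mul (contDiff_mono x₀ (a - 1) b)))]
  have hinner : ∀ a ∈ Finset.range (q + 1),
      (pd 0)^[A] ((pd 1)^[B]
        (fun y => ∑ b ∈ Finset.range (q + 1 - a), (tcoef q f x₀ a b * a) * mono x₀ (a - 1) b y)) x₀
      = ∑ b ∈ Finset.range (q + 1 - a),
          (if a - 1 = A ∧ b = B then (tcoef q f x₀ a b * a) * ((A.factorial * B.factorial : ℕ) : ℂ)
            else 0) := by
    intro a _
    rw [D_sum x₀ _ _ A B (fun b _ => contDiff_const.mul (contDiff_mono x₀ (a - 1) b))]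
    exact Finset.sum_congr rfl (fun b _ => D_cmono x₀ _ (a - 1) b A B)
  rw [Finset.sum_congr rfl hinner]
  have hzero_term : ∀ a b : ℕ, a ≠ A + 1 →
      (if a - 1 = A ∧ b = B then (tcoef q f x₀ a b * a) * ((A.factorial * B.factorial : ℕ) : ℂ)
        else 0) = 0 := by
    intro a b haA
    rcases Nat.eq_zero_or_pos a with rfl | hapos
    · by_cases h0 : 0 - 1 = A ∧ b = B
      · rw [if_pos h0]; simp
      · rw [if_neg h0]
    · have hno : ¬(a - 1 = A ∧ b = B) := by
        rintro ⟨h1, rfl⟩; exact haA (by omega)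
      rw [if_neg hno]
  by_cases hq : A + 1 + B ≤ q
  · rw [if_pos hq]
    have houter := Finset.sum_eq_single_of_mem (s := Finset.range (q + 1)) (f := fun a => ∑ b ∈ Finset.range (q + 1 - a),
        (if a - 1 = A ∧ b = B then (tcoef q f x₀ a b * a) * ((A.factorial * B.factorial : ℕ) : ℂ)
          else 0))
      (A + 1) (Finset.mem_range.2 (by omega))
      (fun a _ haA => Finset.sum_eq_zero (fun b _ => hzero_term a b haA))
    have hB := Finset.sum_eq_single_of_mem (s := Finset.range (q + 1 - (A + 1)))
      (f := fun b =>
        (if A + 1 - 1 = A ∧ b = B then (tcoef q f x₀ (A + 1) b * (A + 1 : ℕ))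
          * ((A.factorial * B.factorial : ℕ) : ℂ) else 0))
      B (Finset.mem_range.2 (by omega))
      (fun b _ hbB => by simp [hbB])
    refine Eq.trans houter (Eq.trans hB ?_)
    beta_reduce
    rw [if_pos ⟨by omega, rfl⟩, tcoef]
    have hfact : (((A + 1).factorial * B.factorial : ℕ) : ℂ) ≠ 0 := by
      exact_mod_cast Nat.mul_ne_zero (A + 1).factorial_ne_zero B.factorial_ne_zero
    rw [div_mul_eq_mul_div, div_mul_eq_mul_div, div_eq_iff hfact]
    rw [Nat.factorial_succ]
    push_cast
    ring
  · rw [if_neg hq]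
    apply Finset.sum_eq_zero; intro a ha
    apply Finset.sum_eq_zero; intro b hb
    rcases Nat.eq_zero_or_pos a with rfl | hapos
    · by_cases h0 : 0 - 1 = A ∧ b = B
      · rw [if_pos h0]; simp
      · rw [if_neg h0]
    · have hno : ¬(a - 1 = A ∧ b = B) := by
        rintro ⟨h1, rfl⟩
        have h1' := Finset.mem_range.1 ha
        have h2' := Finset.mem_range.1 hb
        omega
      rw [if_neg hno]

lemma D_zero (a b : ℕ) (x₀ : ℝ × ℝ) :
    (pd 0)^[a] ((pd 1)^[b] (fun _ => (0 : ℂ))) x₀ = 0 := by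
  rw [pdIter_zero, pdIter_zero]

lemma contDiff_pd0_tpoly (q : ℕ) (f : ℝ × ℝ → ℂ) (x₀ : ℝ × ℝ) {k : WithTop ℕ∞} :
    ContDiff ℝ k (pd 0 (tpoly q f x₀)) := by
  rw [pd0_tpoly_rep]
  exact ContDiff.sum fun a _ => ContDiff.sum fun b _ =>
    contDiff_const.mul (contDiff_mono x₀ (a - 1) b)

lemma contDiff_pd1_tpoly (q : ℕ) (f : ℝ × ℝ → ℂ) (x₀ : ℝ × ℝ) {k : WithTop ℕ∞} :
    ContDiff ℝ k (pd 1 (tpoly q f x₀)) := by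
  rw [pd1_tpoly_rep]
  exact ContDiff.sum fun a _ => ContDiff.sum fun b _ =>
    contDiff_const.mul (contDiff_mono x₀ a (b - 1))

lemma part1_aux {U : Set (ℝ × ℝ)} (hU : IsOpen U) {x₀ : ℝ × ℝ} (hx₀ : x₀ ∈ U)
    (d : ℕ) (hd : 2 ≤ d) (K : ℂ) (p v : ℝ × ℝ → ℂ)
    (hp : ContDiffOn ℝ ((d + 1 : ℕ)) p U) (hv : ContDiffOn ℝ ((d : ℕ)) v U)
    (heq : ∀ x ∈ U, K * v x + pd 0 p x = 0) :
    ∀ a b : ℕ, a + b ≤ d - 1 →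
      (pd 0)^[a] ((pd 1)^[b]
        (fun x => K * tpoly (d - 1) v x₀ x + pd 0 (tpoly d p x₀) x)) x₀ = 0 := by
  intro a b hab
  have hd1 : a + 1 + b ≤ d := by omega
  have e2 : (pd 0)^[a] ((pd 1)^[b] (fun x => K * v x + pd 0 p x)) x₀
      = K * (pd 0)^[a] ((pd 1)^[b] v) x₀ + (pd 0)^[a + 1] ((pd 1)^[b] p) x₀ :=
    calc (pd 0)^[a] ((pd 1)^[b] (fun x => K * v x + pd 0 p x)) x₀
        = (pd 0)^[a] ((pd 1)^[b] (fun x => K * v x)) x₀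
          + (pd 0)^[a] ((pd 1)^[b] (pd 0 p)) x₀ :=
        D_add_on hU hx₀ (m := d) (contDiffOn_const.mul hv) (pd_contDiffOn hU hp 0) (by omega)
      _ = K * (pd 0)^[a] ((pd 1)^[b] v) x₀ + (pd 0)^[a + 1] ((pd 1)^[b] p) x₀ := by
        rw [D_const_mul_on hU hx₀ (m := d) K hv (by omega), D_pd0_on hU hx₀ hp (by omega)]
  have e3 : (pd 0)^[a] ((pd 1)^[b] (fun x => K * v x + pd 0 p x)) x₀ = 0 :=
    (D_congrOn hU hx₀ (f := fun x => K * v x + pd 0 p x) (g := fun _ => (0 : ℂ))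
      heq a b).trans (D_zero a b x₀)
  rw [e2] at e3
  calc (pd 0)^[a] ((pd 1)^[b]
        (fun x => K * tpoly (d - 1) v x₀ x + pd 0 (tpoly d p x₀) x)) x₀
      = (pd 0)^[a] ((pd 1)^[b] (fun x => K * tpoly (d - 1) v x₀ x)) x₀
        + (pd 0)^[a] ((pd 1)^[b] (pd 0 (tpoly d p x₀))) x₀ :=
      D_add_on isOpen_univ (Set.mem_univ x₀) (m := a + b)
        (contDiffOn_univ.2 (contDiff_const.mul (contDiff_tpoly _ _ _)))
        (contDiffOn_univ.2 (contDiff_pd0_tpoly d p x₀)) le_rfl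
    _ = K * (pd 0)^[a] ((pd 1)^[b] v) x₀ + (pd 0)^[a + 1] ((pd 1)^[b] p) x₀ := by
      rw [D_const_mul_on isOpen_univ (Set.mem_univ x₀) (m := a + b) K
        (contDiffOn_univ.2 (contDiff_tpoly _ _ _)) le_rfl]
      rw [D_tpoly, D_pd0_tpoly, if_pos hab, if_pos hd1]
    _ = 0 := e3

lemma part2_aux {U : Set (ℝ × ℝ)} (hU : IsOpen U) {x₀ : ℝ × ℝ} (hx₀ : x₀ ∈ U)
    (d : ℕ) (hd : 2 ≤ d) (K : ℂ) (p v : ℝ × ℝ → ℂ)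
    (hp : ContDiffOn ℝ ((d + 1 : ℕ)) p U) (hv : ContDiffOn ℝ ((d : ℕ)) v U)
    (heq : ∀ x ∈ U, K * v x + pd 1 p x = 0) :
    ∀ a b : ℕ, a + b ≤ d - 1 →
      (pd 0)^[a] ((pd 1)^[b]
        (fun x => K * tpoly (d - 1) v x₀ x + pd 1 (tpoly d p x₀) x)) x₀ = 0 := by
  intro a b hab
  have hd1 : a + (b + 1) ≤ d := by omega
  have e2 : (pd 0)^[a] ((pd 1)^[b] (fun x => K * v x + pd 1 p x)) x₀
      = K * (pd 0)^[a] ((pd 1)^[b] v) x₀ + (pd 0)^[a] ((pd 1)^[b + 1] p) x₀ :=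
    calc (pd 0)^[a] ((pd 1)^[b] (fun x => K * v x + pd 1 p x)) x₀
        = (pd 0)^[a] ((pd 1)^[b] (fun x => K * v x)) x₀
          + (pd 0)^[a] ((pd 1)^[b] (pd 1 p)) x₀ :=
        D_add_on hU hx₀ (m := d) (contDiffOn_const.mul hv) (pd_contDiffOn hU hp 1) (by omega)
      _ = K * (pd 0)^[a] ((pd 1)^[b] v) x₀ + (pd 0)^[a] ((pd 1)^[b + 1] p) x₀ := by
        rw [D_const_mul_on hU hx₀ (m := d) K hv (by omega), D_pd1 a b p x₀]
  have e3 : (pd 0)^[a] ((pd 1)^[b] (fun x => K * v x + pd 1 p x)) x₀ = 0 :=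
    (D_congrOn hU hx₀ (f := fun x => K * v x + pd 1 p x) (g := fun _ => (0 : ℂ))
      heq a b).trans (D_zero a b x₀)
  rw [e2] at e3
  calc (pd 0)^[a] ((pd 1)^[b]
        (fun x => K * tpoly (d - 1) v x₀ x + pd 1 (tpoly d p x₀) x)) x₀
      = (pd 0)^[a] ((pd 1)^[b] (fun x => K * tpoly (d - 1) v x₀ x)) x₀
        + (pd 0)^[a] ((pd 1)^[b] (pd 1 (tpoly d p x₀))) x₀ :=
      D_add_on isOpen_univ (Set.mem_univ x₀) (m := a + b)
        (contDiffOn_univ.2 (contDiff_const.mul (contDiff_tpoly _ _ _)))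
        (contDiffOn_univ.2 (contDiff_pd1_tpoly d p x₀)) le_rfl
    _ = K * (pd 0)^[a] ((pd 1)^[b] v) x₀ + (pd 0)^[a] ((pd 1)^[b + 1] p) x₀ := by
      rw [D_const_mul_on isOpen_univ (Set.mem_univ x₀) (m := a + b) K
        (contDiffOn_univ.2 (contDiff_tpoly _ _ _)) le_rfl]
      rw [D_pd1, D_tpoly, D_tpoly, if_pos hab, if_pos hd1]
    _ = 0 := e3

lemma part3_aux {U : Set (ℝ × ℝ)} (hU : IsOpen U) {x₀ : ℝ × ℝ} (hx₀ : x₀ ∈ U)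
    (d : ℕ) (hd : 2 ≤ d) (g p vx vy : ℝ × ℝ → ℂ)
    (hg : ContDiffOn ℝ ((d - 2 : ℕ)) g U) (hp : ContDiffOn ℝ ((d + 1 : ℕ)) p U)
    (hvx : ContDiffOn ℝ ((d : ℕ)) vx U) (hvy : ContDiffOn ℝ ((d : ℕ)) vy U)
    (heq : ∀ x ∈ U, g x * p x + pd 0 vx x + pd 1 vy x = 0) :
    ∀ a b : ℕ, a + b ≤ d - 2 →
      (pd 0)^[a] ((pd 1)^[b] (fun x => g x * tpoly d p x₀ x
        + pd 0 (tpoly (d - 1) vx x₀) x + pd 1 (tpoly (d - 1) vy x₀) x)) x₀ = 0 := by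
  intro a b hab
  have hX : a + 1 + b ≤ d - 1 := by omega
  have hY : a + (b + 1) ≤ d - 1 := by omega
  have hp' : ContDiffOn ℝ ((d - 2 : ℕ)) p U :=
    hp.of_le (by exact_mod_cast (by omega : d - 2 ≤ d + 1))
  have hvx' : ContDiffOn ℝ (((d - 1) + 1 : ℕ)) vx U := by
    have h : d - 1 + 1 = d := by omega
    rw [h]; exact hvx
  have hvy' : ContDiffOn ℝ (((d - 1) + 1 : ℕ)) vy U := by
    have h : d - 1 + 1 = d := by omega
    rw [h]; exact hvy
  have hTpOn : ContDiffOn ℝ ((d - 2 : ℕ)) (tpoly d p x₀) U := (contDiff_tpoly d p x₀).contDiffOn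
  -- vanishing of the Taylor remainder of p
  have hvanish : ∀ α β : ℕ, α + β ≤ d - 2 →
      (pd 0)^[α] ((pd 1)^[β] (fun x => tpoly d p x₀ x - p x)) x₀ = 0 := by
    intro α β hαβ
    calc (pd 0)^[α] ((pd 1)^[β] (fun x => tpoly d p x₀ x - p x)) x₀
        = (pd 0)^[α] ((pd 1)^[β] (fun x => tpoly d p x₀ x + (-1 : ℂ) * p x)) x₀ :=
        D_congrOn hU hx₀ (fun x _ => by ring) α β
      _ = (pd 0)^[α] ((pd 1)^[β] (tpoly d p x₀)) x₀
          + (pd 0)^[α] ((pd 1)^[β] (fun x => (-1 : ℂ) * p x)) x₀ :=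
        D_add_on hU hx₀ (m := d - 2) hTpOn (contDiffOn_const.mul hp') (by omega)
      _ = 0 := by
        rw [D_const_mul_on hU hx₀ (m := d - 2) (-1) hp' (by omega), D_tpoly,
          if_pos (by omega : α + β ≤ d)]
        ring
  -- value of g * p
  have V1 : (pd 0)^[a] ((pd 1)^[b] (fun x => g x * p x)) x₀
      = -((pd 0)^[a + 1] ((pd 1)^[b] vx) x₀ + (pd 0)^[a] ((pd 1)^[b + 1] vy) x₀) :=
    calc (pd 0)^[a] ((pd 1)^[b] (fun x => g x * p x)) x₀
        = (pd 0)^[a] ((pd 1)^[b] (fun x => (-1 : ℂ) * (pd 0 vx x + pd 1 vy x))) x₀ :=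
        D_congrOn hU hx₀ (fun x hx => by linear_combination heq x hx) a b
      _ = (-1 : ℂ) * (pd 0)^[a] ((pd 1)^[b] (fun x => pd 0 vx x + pd 1 vy x)) x₀ :=
        D_const_mul_on hU hx₀ (m := d - 1) (-1)
          ((pd_contDiffOn hU hvx' 0).add (pd_contDiffOn hU hvy' 1)) (by omega)
      _ = -((pd 0)^[a + 1] ((pd 1)^[b] vx) x₀ + (pd 0)^[a] ((pd 1)^[b + 1] vy) x₀) := by
        rw [D_add_on hU hx₀ (m := d - 1) (pd_contDiffOn hU hvx' 0)
          (pd_contDiffOn hU hvy' 1) (by omega)]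
        rw [D_pd0_on hU hx₀ hvx (by omega), D_pd1 a b vy x₀]
        ring
  -- value of g * (Taylor p)
  have Vpoly1 : (pd 0)^[a] ((pd 1)^[b] (fun x => g x * tpoly d p x₀ x)) x₀
      = -((pd 0)^[a + 1] ((pd 1)^[b] vx) x₀ + (pd 0)^[a] ((pd 1)^[b + 1] vy) x₀) :=
    calc (pd 0)^[a] ((pd 1)^[b] (fun x => g x * tpoly d p x₀ x)) x₀
        = (pd 0)^[a] ((pd 1)^[b]
            (fun x => g x * (tpoly d p x₀ x - p x) + g x * p x)) x₀ :=
        D_congrOn hU hx₀ (fun x _ => by ring) a b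
      _ = (pd 0)^[a] ((pd 1)^[b] (fun x => g x * (tpoly d p x₀ x - p x))) x₀
          + (pd 0)^[a] ((pd 1)^[b] (fun x => g x * p x)) x₀ :=
        D_add_on hU hx₀ (m := d - 2) (hg.mul (hTpOn.sub hp')) (hg.mul hp') (by omega)
      _ = -((pd 0)^[a + 1] ((pd 1)^[b] vx) x₀ + (pd 0)^[a] ((pd 1)^[b + 1] vy) x₀) := by
        rw [V1, leibniz_zero hU hx₀ (d - 2) (d - 2) g (fun x => tpoly d p x₀ x - p x)
          hg (hTpOn.sub hp') le_rfl hvanish a b hab]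
        ring
  -- assemble
  have V2 : (pd 0)^[a] ((pd 1)^[b] (pd 0 (tpoly (d - 1) vx x₀))) x₀
      = (pd 0)^[a + 1] ((pd 1)^[b] vx) x₀ := by
    rw [D_pd0_tpoly, if_pos hX]
  have V3 : (pd 0)^[a] ((pd 1)^[b] (pd 1 (tpoly (d - 1) vy x₀))) x₀
      = (pd 0)^[a] ((pd 1)^[b + 1] vy) x₀ := by
    rw [D_pd1, D_tpoly, if_pos hY]
  calc (pd 0)^[a] ((pd 1)^[b] (fun x => g x * tpoly d p x₀ x
        + pd 0 (tpoly (d - 1) vx x₀) x + pd 1 (tpoly (d - 1) vy x₀) x)) x₀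
      = (pd 0)^[a] ((pd 1)^[b]
          (fun x => g x * tpoly d p x₀ x + pd 0 (tpoly (d - 1) vx x₀) x)) x₀
        + (pd 0)^[a] ((pd 1)^[b] (pd 1 (tpoly (d - 1) vy x₀))) x₀ :=
      D_add_on hU hx₀ (m := d - 2)
        ((hg.mul hTpOn).add (contDiff_pd0_tpoly (d - 1) vx x₀).contDiffOn)
        (contDiff_pd1_tpoly (d - 1) vy x₀).contDiffOn (by omega)
    _ = ((pd 0)^[a] ((pd 1)^[b] (fun x => g x * tpoly d p x₀ x)) x₀
        + (pd 0)^[a] ((pd 1)^[b] (pd 0 (tpoly (d - 1) vx x₀))) x₀)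
        + (pd 0)^[a] ((pd 1)^[b] (pd 1 (tpoly (d - 1) vy x₀))) x₀ := by
      rw [D_add_on hU hx₀ (m := d - 2) (hg.mul hTpOn)
        (contDiff_pd0_tpoly (d - 1) vx x₀).contDiffOn (by omega)]
    _ = 0 := by
      rw [Vpoly1, V2, V3]
      ring

end QTaux

open QTaux

/-- If `(p, v_x, v_y) ∈ C^{d+1} × C^d × C^d` is an exact solution of the
first-order system `S₁ = S₂ = S₃ = 0` in a neighborhood of `x₀`, then the Taylor
truncations `(𝒯_d p, 𝒯_{d-1} v_x, 𝒯_{d-1} v_y)` satisfy the quasi-Trefftz conditions: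
`𝒯_{d-1}(Sᵢ(truncations)) = 0` for `i = 1, 2` and `𝒯_{d-2}(S₃(truncations)) = 0`. -/
theorem taylor_truncation_in_quasiTrefftz
    (x₀ : ℝ × ℝ) (d : ℕ) (hd : 2 ≤ d)
    (ω ρ : ℝ) (hρ : 0 < ρ)
    (c : ℝ × ℝ → ℝ) (hc : ContDiffAt ℝ (d - 2) c x₀) (hc0 : c x₀ ≠ 0)
    (p vx vy : ℝ × ℝ → ℂ)
    (hp : ContDiffAt ℝ (d + 1) p x₀) (hvx : ContDiffAt ℝ d vx x₀)
    (hvy : ContDiffAt ℝ d vy x₀)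
    (hS1 : ∀ᶠ x in nhds x₀, -(Complex.I * ω * ρ) * vx x + pd 0 p x = 0)
    (hS2 : ∀ᶠ x in nhds x₀, -(Complex.I * ω * ρ) * vy x + pd 1 p x = 0)
    (hS3 : ∀ᶠ x in nhds x₀,
      -(Complex.I * ω / (ρ * (c x : ℂ) ^ 2)) * p x + pd 0 vx x + pd 1 vy x = 0) :
    taylorZero (d - 1)
      (fun x => -(Complex.I * ω * ρ) * tpoly (d - 1) vx x₀ x + pd 0 (tpoly d p x₀) x) x₀ ∧
    taylorZero (d - 1)
      (fun x => -(Complex.I * ω * ρ) * tpoly (d - 1) vy x₀ x + pd 1 (tpoly d p x₀) x) x₀ ∧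
    taylorZero (d - 2)
      (fun x => -(Complex.I * ω / (ρ * (c x : ℂ) ^ 2)) * tpoly d p x₀ x
          + pd 0 (tpoly (d - 1) vx x₀) x + pd 1 (tpoly (d - 1) vy x₀) x) x₀ := by
  have hcast1 : ((d + 1 : ℕ) : WithTop ℕ∞) = (d : WithTop ℕ∞) + 1 := by push_cast; ring
  obtain ⟨u1, hu1, hpOn⟩ := hp.contDiffOn (m := ((d + 1 : ℕ) : WithTop ℕ∞))
    (le_of_eq hcast1) (by simp)
  obtain ⟨u2, hu2, hvxOn⟩ := hvx.contDiffOn (m := ((d : ℕ) : WithTop ℕ∞)) le_rfl (by simp)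
  obtain ⟨u3, hu3, hvyOn⟩ := hvy.contDiffOn (m := ((d : ℕ) : WithTop ℕ∞)) le_rfl (by simp)
  have hcast2 : ((d - 2 : ℕ) : WithTop ℕ∞) = (d : WithTop ℕ∞) - 2 := by
    have h1 : ((d - 2 : ℕ) : ℕ∞) = (d : ℕ∞) - 2 := ENat.coe_sub d 2
    calc ((d - 2 : ℕ) : WithTop ℕ∞) = (((d - 2 : ℕ) : ℕ∞) : WithTop ℕ∞) := by norm_cast
      _ = (((d : ℕ∞) - 2 : ℕ∞) : WithTop ℕ∞) := by rw [h1]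
      _ = (d : WithTop ℕ∞) - 2 := by rw [WithTop.coe_sub]; norm_cast
  have hgAt : ContDiffAt ℝ ((d - 2 : ℕ))
      (fun x => -(Complex.I * (ω : ℂ) / ((ρ : ℂ) * ((c x : ℝ) : ℂ) ^ 2))) x₀ := by
    have hc' : ContDiffAt ℝ ((d - 2 : ℕ)) c x₀ := by rw [hcast2]; exact hc
    have hcc : ContDiffAt ℝ ((d - 2 : ℕ)) (fun x => ((c x : ℝ) : ℂ)) x₀ :=
      Complex.ofRealCLM.contDiff.contDiffAt.comp x₀ hc'
    have hden : ContDiffAt ℝ ((d - 2 : ℕ)) (fun x => (ρ : ℂ) * ((c x : ℝ) : ℂ) ^ 2) x₀ :=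
      contDiffAt_const.mul (hcc.pow 2)
    have hne : (ρ : ℂ) * ((c x₀ : ℝ) : ℂ) ^ 2 ≠ 0 :=
      mul_ne_zero (by exact_mod_cast hρ.ne') (pow_ne_zero 2 (by exact_mod_cast hc0))
    have hinv : ContDiffAt ℝ ((d - 2 : ℕ))
        (fun x => (Complex.I * (ω : ℂ)) * ((ρ : ℂ) * ((c x : ℝ) : ℂ) ^ 2)⁻¹) x₀ :=
      contDiffAt_const.mul (hden.inv hne)
    have heqf : (fun x => -(Complex.I * (ω : ℂ) / ((ρ : ℂ) * ((c x : ℝ) : ℂ) ^ 2)))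
        = fun x : ℝ × ℝ => -((Complex.I * (ω : ℂ)) * ((ρ : ℂ) * ((c x : ℝ) : ℂ) ^ 2)⁻¹) := by
      funext x
      rw [div_eq_mul_inv]
    rw [heqf]
    exact hinv.neg
  obtain ⟨u4, hu4, hgOn⟩ := hgAt.contDiffOn le_rfl (by simp)
  have hbig : u1 ∩ (u2 ∩ (u3 ∩ (u4 ∩
      ({x | -(Complex.I * ↑ω * ↑ρ) * vx x + pd 0 p x = 0} ∩
      ({x | -(Complex.I * ↑ω * ↑ρ) * vy x + pd 1 p x = 0} ∩
       {x | -(Complex.I * ↑ω / (↑ρ * (c x : ℂ) ^ 2)) * p x + pd 0 vx x + pd 1 vy x = 0})))))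
      ∈ 𝓝 x₀ :=
    Filter.inter_mem hu1 (Filter.inter_mem hu2 (Filter.inter_mem hu3 (Filter.inter_mem hu4
      (Filter.inter_mem hS1 (Filter.inter_mem hS2 hS3)))))
  obtain ⟨U, hUsub, hUopen, hx₀U⟩ := mem_nhds_iff.1 hbig
  have hpU : ContDiffOn ℝ ((d + 1 : ℕ)) p U := hpOn.mono fun x hx => (hUsub hx).1
  have hvxU : ContDiffOn ℝ ((d : ℕ)) vx U := hvxOn.mono fun x hx => (hUsub hx).2.1
  have hvyU : ContDiffOn ℝ ((d : ℕ)) vy U := hvyOn.mono fun x hx => (hUsub hx).2.2.1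
  have hgU : ContDiffOn ℝ ((d - 2 : ℕ))
      (fun x => -(Complex.I * (ω : ℂ) / ((ρ : ℂ) * ((c x : ℝ) : ℂ) ^ 2))) U :=
    hgOn.mono fun x hx => (hUsub hx).2.2.2.1
  have h1U : ∀ x ∈ U, -(Complex.I * ↑ω * ↑ρ) * vx x + pd 0 p x = 0 :=
    fun x hx => (hUsub hx).2.2.2.2.1
  have h2U : ∀ x ∈ U, -(Complex.I * ↑ω * ↑ρ) * vy x + pd 1 p x = 0 :=
    fun x hx => (hUsub hx).2.2.2.2.2.1
  have h3U : ∀ x ∈ U,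
      -(Complex.I * ↑ω / (↑ρ * (c x : ℂ) ^ 2)) * p x + pd 0 vx x + pd 1 vy x = 0 :=
    fun x hx => (hUsub hx).2.2.2.2.2.2
  have P1 := part1_aux hUopen hx₀U d hd (-(Complex.I * (ω:ℂ) * (ρ:ℂ))) p vx hpU hvxU h1U
  have P2 := part2_aux hUopen hx₀U d hd (-(Complex.I * (ω:ℂ) * (ρ:ℂ))) p vy hpU hvyU h2U
  have P3 := part3_aux hUopen hx₀U d hd
    (fun x => -(Complex.I * (ω : ℂ) / ((ρ : ℂ) * ((c x : ℝ) : ℂ) ^ 2)))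
    p vx vy hgU hpU hvxU hvyU h3U
  exact ⟨P1, P2, P3⟩
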